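/- Let T ⊂ ℝ^3 be an empty lattice tetrahedron that is not unimodular. Then the pair (T,T) is not IDP: there is a lattice point in 2T ∩ ℤ^3 that is not the sum of two points of T ∩ ℤ^3. -/

import Mathlib

open scoped Pointwise

noncomputable section

/-- The real point corresponding to an integer point of `ℤ³`. -/
def toR3 (v : Fin 3 → ℤ) : Fin 3 → ℝ := fun i => (v i : ℝ)

/-- An empty lattice tetrahedron: four affinely independent lattice points whose
convex hull contains no lattice points other than its vertices. -/
def EmptyLatticeTet (p : Fin 4 → Fin 3 → ℤ) : Prop :=
  AffineIndependent ℝ (fun i => toR3 (p i)) ∧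
  ∀ z : Fin 3 → ℤ,
    toR3 z ∈ convexHull ℝ (Set.range fun i => toR3 (p i)) → ∃ i, z = p i

lemma toR3_add (u v : Fin 3 → ℤ) : toR3 (u + v) = toR3 u + toR3 v := by
  funext i; simp [toR3]

lemma toR3_sub (u v : Fin 3 → ℤ) : toR3 (u - v) = toR3 u - toR3 v := by
  funext i; simp [toR3]

lemma toR3_zsmul (n : ℤ) (v : Fin 3 → ℤ) : toR3 (n • v) = (n : ℝ) • toR3 v := by
  funext i; simp [toR3]

lemma toR3_sum {ι : Type*} (s : Finset ι) (f : ι → Fin 3 → ℤ) :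
    toR3 (∑ i ∈ s, f i) = ∑ i ∈ s, toR3 (f i) := by
  induction s using Finset.cons_induction with
  | empty => funext i; simp [toR3]
  | cons a s ha ih => rw [Finset.sum_cons, Finset.sum_cons, toR3_add, ih]

/-- If `T` is an empty lattice tetrahedron which is not unimodular, then the
pair `(T,T)` is not IDP: there is a lattice point of `2T` which is not a sum of
two lattice points of `T`. -/
theorem empty_non_unimodular_tet_not_IDP
    (p : Fin 4 → Fin 3 → ℤ)
    (hEmpty : EmptyLatticeTet p)
    (hNotUni : (Matrix.of ![p 1 - p 0, p 2 - p 0, p 3 - p 0]).det ∉ ({1, -1} : Set ℤ)) :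
    ∃ z : Fin 3 → ℤ,
      toR3 z ∈ (2:ℝ) • convexHull ℝ (Set.range fun i => toR3 (p i)) ∧
      ¬ ∃ x y : Fin 3 → ℤ,
          toR3 x ∈ convexHull ℝ (Set.range fun i => toR3 (p i)) ∧
          toR3 y ∈ convexHull ℝ (Set.range fun i => toR3 (p i)) ∧
          z = x + y := by
  classical
  obtain ⟨hAff, hLat⟩ := hEmpty
  set P : Fin 4 → Fin 3 → ℝ := fun i => toR3 (p i) with hPdef
  set b : Fin 3 → Fin 3 → ℤ := fun k => p k.succ - p 0 with hbdef
  set L : Submodule ℤ (Fin 3 → ℤ) := Submodule.span ℤ (Set.range b) with hLdef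
  have hbL : ∀ k, b k ∈ L := fun k => Submodule.subset_span (Set.mem_range_self k)
  have hpL : ∀ i : Fin 4, p i - p 0 ∈ L := by
    intro i
    fin_cases i
    · exact sub_self (p 0) ▸ L.zero_mem
    · exact hbL 0
    · exact hbL 1
    · exact hbL 2
  -- there is a lattice point outside L
  obtain ⟨t, htL⟩ : ∃ t : Fin 3 → ℤ, t ∉ L := by
    by_contra hcon
    push_neg at hcon
    have hsurj : Function.Surjective (Matrix.of b).vecMul := by
      intro y
      have hy : y ∈ LinearMap.range (Matrix.of b).vecMulLinear := by
        rw [range_vecMulLinear]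
        exact hcon y
      obtain ⟨x, hx⟩ := hy
      exact ⟨x, hx⟩
    have hunit : IsUnit (Matrix.of b).det :=
      (Matrix.isUnit_iff_isUnit_det _).mp (Matrix.vecMul_surjective_iff_isUnit.mp hsurj)
    have hMeq : Matrix.of ![p 1 - p 0, p 2 - p 0, p 3 - p 0] = Matrix.of b := by
      congr 1
      funext k
      fin_cases k <;> rfl
    rw [hMeq] at hNotUni
    rcases Int.isUnit_iff.mp hunit with h | h
    · exact hNotUni (by rw [h]; simp)
    · exact hNotUni (by rw [h]; simp)
  -- the real vectors B form a basis of ℝ³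
  set B : Fin 3 → Fin 3 → ℝ := fun k => toR3 (b k) with hBdef
  have hBP : ∀ k, B k = P k.succ - P 0 := by
    intro k
    funext i
    simp [hBdef, hPdef, hbdef, toR3]
  have hli0 := (affineIndependent_iff_linearIndependent_vsub ℝ P 0).mp hAff
  have hinj : Function.Injective
      (fun k : Fin 3 => (⟨k.succ, Fin.succ_ne_zero k⟩ : {x : Fin 4 // x ≠ 0})) := by
    intro a b h
    have := congrArg Subtype.val h
    exact Fin.succ_injective _ this
  have hliB : LinearIndependent ℝ B := by
    have h2 := hli0.comp _ hinj
    have hfun : B = (fun i : {x : Fin 4 // x ≠ 0} => P ↑i -ᵥ P 0) ∘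
        (fun k : Fin 3 => (⟨k.succ, Fin.succ_ne_zero k⟩ : {x : Fin 4 // x ≠ 0})) := by
      funext k
      simp only [Function.comp_apply, vsub_eq_sub]
      rw [hBP k]
    rw [hfun]
    exact h2
  have hcard : Fintype.card (Fin 3) = Module.finrank ℝ (Fin 3 → ℝ) := by
    simp [Module.finrank_fin_fun]
  let Bas : Module.Basis (Fin 3) ℝ (Fin 3 → ℝ) := basisOfLinearIndependentOfCardEqFinrank hliB hcard
  have hBasCoe : ⇑Bas = B := coe_basisOfLinearIndependentOfCardEqFinrank hliB hcard
  -- coordinates of t and its fractional reduction s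
  set c : Fin 3 → ℝ := fun k => Bas.repr (toR3 t) k with hcdef
  set q : Fin 3 → ℤ := fun k => ⌊c k⌋ with hqdef
  set lam : Fin 3 → ℝ := fun k => Int.fract (c k) with hlamdef
  have hlam0 : ∀ k, 0 ≤ lam k := fun k => Int.fract_nonneg _
  have hlam1 : ∀ k, lam k < 1 := fun k => Int.fract_lt_one _
  have hcq : ∀ k, c k = (q k : ℝ) + lam k := fun k => (Int.floor_add_fract _).symm
  set s : Fin 3 → ℤ := t - ∑ k, q k • b k with hsdef
  have hsL : s ∉ L := by
    intro hs
    apply htL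
    have hsum : (∑ k, q k • b k) ∈ L := Submodule.sum_mem _ fun k _ => L.smul_mem _ (hbL k)
    have ht' : t = s + ∑ k, q k • b k := by rw [hsdef]; abel
    rw [ht']
    exact L.add_mem hs hsum
  have hts : toR3 t = ∑ k, c k • B k := by
    conv_lhs => rw [← Bas.sum_repr (toR3 t)]
    refine Finset.sum_congr rfl fun k _ => ?_
    rw [hBasCoe]
  have hsR : toR3 s = ∑ k, lam k • B k := by
    have h1 : toR3 s = toR3 t - ∑ k, (q k : ℝ) • B k := by
      rw [hsdef, toR3_sub, toR3_sum]
      congr 1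
      refine Finset.sum_congr rfl fun k _ => ?_
      rw [toR3_zsmul]
    rw [h1, hts, ← Finset.sum_sub_distrib]
    refine Finset.sum_congr rfl fun k _ => ?_
    rw [hcq k, ← sub_smul]
    congr 1
    ring
  -- convex hull membership from convex combinations
  have hullmem : ∀ (μ : Fin 4 → ℝ), (∀ i, 0 ≤ μ i) → (∑ i, μ i) = 1 →
      (∑ i, μ i • P i) ∈ convexHull ℝ (Set.range P) := by
    intro μ h0 h1
    have hcm := Finset.centerMass_mem_convexHull (Finset.univ (α := Fin 4))
      (fun i _ => h0 i) (by rw [h1]; norm_num)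
      (fun i _ => Set.mem_range_self (f := P) i)
    rwa [Finset.centerMass_eq_of_sum_1 _ _ h1] at hcm
  -- membership criterion for 2T
  have key : ∀ (w : Fin 3 → ℝ), (∀ k, 0 ≤ w k) → (∑ k, w k) ≤ 2 →
      ((2:ℝ) • P 0 + ∑ k, w k • B k) ∈ (2:ℝ) • convexHull ℝ (Set.range P) := by
    intro w h0 hsum
    set μ : Fin 4 → ℝ := Fin.cons (1 - (∑ k, w k) / 2) (fun k => w k / 2) with hμ
    have hμ0 : ∀ i, 0 ≤ μ i := by
      intro i
      refine Fin.cases ?_ ?_ i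
      · simp only [hμ, Fin.cons_zero]
        linarith
      · intro k
        simp only [hμ, Fin.cons_succ]
        have := h0 k
        linarith
    have hsum3 : ∑ k : Fin 3, w k / 2 = (∑ k, w k) / 2 := by
      rw [Finset.sum_div]
    have hμ1 : ∑ i, μ i = 1 := by
      rw [Fin.sum_univ_succ]
      simp only [hμ, Fin.cons_zero, Fin.cons_succ]
      rw [hsum3]
      ring
    refine Set.mem_smul_set.mpr ⟨∑ i, μ i • P i, hullmem μ hμ0 hμ1, ?_⟩
    rw [Fin.sum_univ_succ]
    simp only [hμ, Fin.cons_zero, Fin.cons_succ]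
    have hPs : ∀ k : Fin 3, P k.succ = P 0 + B k := by
      intro k
      rw [hBP k]
      abel
    simp only [hPs]
    simp only [Fin.sum_univ_three]
    match_scalars <;> ring
  by_cases hS : (∑ k, lam k) ≤ 2
  · refine ⟨((2:ℤ) • p 0) + s, ?_, ?_⟩
    · have hz : toR3 (((2:ℤ) • p 0) + s) = (2:ℝ) • P 0 + ∑ k, lam k • B k := by
        rw [toR3_add, toR3_zsmul, hsR]
        norm_num
        rfl
      rw [hz]
      exact key lam hlam0 hS
    · rintro ⟨x, y, hx, hy, hxy⟩
      obtain ⟨i, rfl⟩ := hLat x hx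
      obtain ⟨j, rfl⟩ := hLat y hy
      apply hsL
      have hs2 : s = (p i - p 0) + (p j - p 0) := by
        have h1 : s = p i + p j - ((2:ℤ) • p 0) := by rw [← hxy]; abel
        rw [h1, two_smul]
        abel
      rw [hs2]
      exact L.add_mem (hpL i) (hpL j)
  · push_neg at hS
    refine ⟨(((2:ℤ) • p 0) + ∑ k, b k) - s, ?_, ?_⟩
    · have hz : toR3 ((((2:ℤ) • p 0) + ∑ k, b k) - s) = (2:ℝ) • P 0 + ∑ k, (1 - lam k) • B k := by
        rw [toR3_sub, toR3_add, toR3_zsmul, toR3_sum, hsR]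
        have hBsum : ∑ k : Fin 3, toR3 (b k) = ∑ k : Fin 3, B k := rfl
        rw [hBsum]
        have : ∑ k : Fin 3, (1 - lam k) • B k
            = (∑ k : Fin 3, B k) - ∑ k : Fin 3, lam k • B k := by
          rw [← Finset.sum_sub_distrib]
          refine Finset.sum_congr rfl fun k _ => ?_
          rw [sub_smul, one_smul]
        rw [this]
        norm_num
        abel
      rw [hz]
      refine key _ (fun k => by linarith [hlam1 k]) ?_
      have h3 : ∑ k : Fin 3, (1 - lam k) = 3 - ∑ k, lam k := by
        rw [Finset.sum_sub_distrib]
        norm_num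
      rw [h3]
      linarith
    · rintro ⟨x, y, hx, hy, hxy⟩
      obtain ⟨i, rfl⟩ := hLat x hx
      obtain ⟨j, rfl⟩ := hLat y hy
      apply hsL
      have hsum : (∑ k, b k) ∈ L := Submodule.sum_mem _ fun k _ => hbL k
      have heq : s = (∑ k, b k) - ((p i - p 0) + (p j - p 0)) := by
        have h1 : (((2:ℤ) • p 0) + ∑ k, b k) - s = p i + p j := hxy
        have h2 : s = ((2:ℤ) • p 0) + (∑ k, b k) - (p i + p j) := by rw [← h1]; abel
        rw [h2, two_smul]
        abel
      rw [heq]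
      exact L.sub_mem hsum (L.add_mem (hpL i) (hpL j))
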